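/- Let n ≥ 1, let k be an integer with 0 < k < n, and let x ∈ ℝⁿ. A point y with 0 < y_i < 1 for all i and ∑_i y_i = k is the minimizer of y ↦ -⟨x, y⟩ - H_b(y) over {y ∈ (0,1)ⁿ : ∑_i y_i = k} if and only if there exists ν ∈ ℝ such that y_i = σ(x_i + ν) for every i. -/

import Mathlib

open Real Finset

noncomputable def logistic (t : ℝ) : ℝ := 1 / (1 + Real.exp (-t))

noncomputable def binEnt {n : ℕ} (y : Fin n → ℝ) : ℝ :=
  -∑ i, (y i * Real.log (y i) + (1 - y i) * Real.log (1 - y i))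

noncomputable def lmlObj {n : ℕ} (x y : Fin n → ℝ) : ℝ :=
  -∑ i, x i * y i - binEnt y

noncomputable def phi (t : ℝ) : ℝ := t * Real.log t + (1 - t) * Real.log (1 - t)

lemma lml_eq {n : ℕ} (x y : Fin n → ℝ) : lmlObj x y = ∑ i, (phi (y i) - x i * y i) := by
  simp only [lmlObj, binEnt, phi, Finset.sum_sub_distrib]
  ring

lemma kl_ineq {a b : ℝ} (ha : a ∈ Set.Ioo (0:ℝ) 1) (hb : b ∈ Set.Ioo (0:ℝ) 1) :
    b * Real.log a + (1-b) * Real.log (1-a) ≤ b * Real.log b + (1-b) * Real.log (1-b) := by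
  obtain ⟨ha0, ha1⟩ := ha
  obtain ⟨hb0, hb1⟩ := hb
  have h1 : Real.log a - Real.log b ≤ a / b - 1 := by
    have := Real.log_le_sub_one_of_pos (x := a / b) (by positivity)
    rwa [Real.log_div (ne_of_gt ha0) (ne_of_gt hb0)] at this
  have h2 : Real.log (1-a) - Real.log (1-b) ≤ (1-a) / (1-b) - 1 := by
    have := Real.log_le_sub_one_of_pos (x := (1-a) / (1-b))
      (by apply div_pos <;> linarith)
    rwa [Real.log_div (by linarith) (by linarith)] at this
  have e1 : b * Real.log a - b * Real.log b ≤ a - b := by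
    have h := mul_le_mul_of_nonneg_left h1 (le_of_lt hb0)
    have hb' : b * (a / b - 1) = a - b := by field_simp
    nlinarith
  have e2 : (1-b) * Real.log (1-a) - (1-b) * Real.log (1-b) ≤ b - a := by
    have h := mul_le_mul_of_nonneg_left h2 (by linarith : (0:ℝ) ≤ 1 - b)
    have hne : (1:ℝ) - b ≠ 0 := by linarith
    have hb' : (1-b) * ((1-a)/(1-b) - 1) = b - a := by field_simp; ring
    nlinarith
  linarith

lemma grad_ineq {a b : ℝ} (ha : a ∈ Set.Ioo (0:ℝ) 1) (hb : b ∈ Set.Ioo (0:ℝ) 1) :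
    phi a + (Real.log a - Real.log (1-a)) * (b - a) ≤ phi b := by
  have key : phi a + (Real.log a - Real.log (1-a)) * (b - a)
      = b * Real.log a + (1-b) * Real.log (1-a) := by unfold phi; ring
  have h := kl_ineq ha hb
  unfold phi at *
  linarith

lemma logistic_mem (t : ℝ) : logistic t ∈ Set.Ioo (0:ℝ) 1 := by
  have h : 0 < Real.exp (-t) := Real.exp_pos _
  constructor
  · unfold logistic; positivity
  · unfold logistic
    rw [div_lt_one (by linarith)]
    linarith

lemma logit_logistic (t : ℝ) :
    Real.log (logistic t) - Real.log (1 - logistic t) = t := by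
  have h : 0 < Real.exp (-t) := Real.exp_pos _
  have h1 : (0:ℝ) < 1 + Real.exp (-t) := by linarith
  have e1 : 1 - logistic t = Real.exp (-t) / (1 + Real.exp (-t)) := by
    unfold logistic; field_simp; ring
  rw [e1]
  unfold logistic
  rw [Real.log_div one_ne_zero (ne_of_gt h1), Real.log_div (ne_of_gt h) (ne_of_gt h1),
    Real.log_exp, Real.log_one]
  ring

lemma logistic_logit {a : ℝ} (ha : a ∈ Set.Ioo (0:ℝ) 1) :
    logistic (Real.log a - Real.log (1-a)) = a := by
  obtain ⟨h0, h1⟩ := ha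
  unfold logistic
  rw [neg_sub, ← Real.log_div (by linarith) (ne_of_gt h0),
    Real.exp_log (div_pos (by linarith) h0)]
  field_simp
  ring

/-- a feasible point `y` is the minimizer of the LML objective over
`{y ∈ (0,1)ⁿ : ∑ y_i = k}` iff there exists `ν ∈ ℝ` with `y_i = σ(x_i + ν)` for all `i`. -/
theorem lml_optimality_iff_dual (n k : ℕ) (hn : 1 ≤ n) (hk : 0 < k) (hkn : k < n)
    (x y : Fin n → ℝ) (hy : ∀ i, y i ∈ Set.Ioo (0 : ℝ) 1) (hsum : ∑ i, y i = k) :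
    (∀ z : Fin n → ℝ, ((∀ i, z i ∈ Set.Ioo (0 : ℝ) 1) ∧ ∑ i, z i = k) →
        lmlObj x y ≤ lmlObj x z) ↔
      ∃ ν : ℝ, ∀ i, y i = logistic (x i + ν) := by
  constructor
  · -- forward: minimizer → dual form
    intro hmin
    set L : Fin n → ℝ := fun i => Real.log (y i) - Real.log (1 - y i) - x i with hL
    have hconst : ∀ i j : Fin n, L i = L j := by
      intro i j
      by_contra hne
      have hij : i ≠ j := by rintro rfl; exact hne rfl
      set c : ℝ := L i - L j with hc
      have hc0 : c ≠ 0 := sub_ne_zero.mpr hne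
      set g : ℝ → ℝ := fun ε =>
        (Real.log (y i + ε) - Real.log (1 - (y i + ε)) - x i)
        - (Real.log (y j - ε) - Real.log (1 - (y j - ε)) - x j) with hg
      have hg0 : g 0 = c := by simp [hg, hc, hL]
      have hgc : ContinuousAt g 0 := by
        have c1 : ContinuousAt (fun ε : ℝ => Real.log (y i + ε)) 0 :=
          ((continuous_const.add continuous_id).continuousAt).log
            (by simpa using ne_of_gt (hy i).1)
        have c2 : ContinuousAt (fun ε : ℝ => Real.log (1 - (y i + ε))) 0 :=
          ((continuous_const.sub (continuous_const.add continuous_id)).continuousAt).log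
            (by simpa using ne_of_gt (sub_pos.mpr (hy i).2))
        have c3 : ContinuousAt (fun ε : ℝ => Real.log (y j - ε)) 0 :=
          ((continuous_const.sub continuous_id).continuousAt).log
            (by simpa using ne_of_gt (hy j).1)
        have c4 : ContinuousAt (fun ε : ℝ => Real.log (1 - (y j - ε))) 0 :=
          ((continuous_const.sub (continuous_const.sub continuous_id)).continuousAt).log
            (by simpa using ne_of_gt (sub_pos.mpr (hy j).2))
        exact ((c1.sub c2).sub continuousAt_const).sub ((c3.sub c4).sub continuousAt_const)
      obtain ⟨δ, hδ0, hδ⟩ := Metric.continuousAt_iff.mp hgc |c| (abs_pos.mpr hc0)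
      set m : ℝ := min δ (min (y i) (min (1 - y i) (min (y j) (1 - y j)))) with hm
      have hm0 : 0 < m := by
        have h1 := (hy i).1; have h2 := (hy i).2; have h3 := (hy j).1; have h4 := (hy j).2
        simp only [hm, lt_min_iff]
        refine ⟨hδ0, h1, by linarith, h3, by linarith⟩
      set ε : ℝ := if 0 < c then -(m/2) else m/2 with hε
      have hεabs : |ε| = m / 2 := by
        rcases lt_or_ge 0 c with h | h
        · rw [hε, if_pos h, abs_neg, abs_of_pos (by linarith)]
        · rw [hε, if_neg (not_lt.mpr h), abs_of_pos (by linarith)]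
      have hεδ : dist ε 0 < δ := by
        rw [Real.dist_eq, sub_zero, hεabs]
        have : m ≤ δ := min_le_left _ _
        linarith
      have hgε := hδ hεδ
      rw [hg0, Real.dist_eq] at hgε
      have hεsmall : |ε| < min (y i) (min (1 - y i) (min (y j) (1 - y j))) := by
        rw [hεabs]
        have : m ≤ min (y i) (min (1 - y i) (min (y j) (1 - y j))) := min_le_right _ _
        linarith
      simp only [lt_min_iff] at hεsmall
      obtain ⟨hε1, hε2, hε3, hε4⟩ := hεsmall
      have hyiε : y i + ε ∈ Set.Ioo (0:ℝ) 1 := by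
        constructor
        · have := neg_abs_le ε; linarith
        · have := le_abs_self ε; linarith
      have hyjε : y j - ε ∈ Set.Ioo (0:ℝ) 1 := by
        constructor
        · have := le_abs_self ε; linarith
        · have := neg_abs_le ε; linarith
      -- the perturbed point
      set z : Fin n → ℝ := Function.update (Function.update y i (y i + ε)) j (y j - ε)
        with hz
      have hzj : z j = y j - ε := by simp [hz]
      have hzi : z i = y i + ε := by
        rw [hz, Function.update_of_ne hij, Function.update_self]
      have hzo : ∀ l, l ≠ i → l ≠ j → z l = y l := by
        intro l hli hlj
        rw [hz, Function.update_of_ne hlj, Function.update_of_ne hli]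
      have hzmem : ∀ l, z l ∈ Set.Ioo (0:ℝ) 1 := by
        intro l
        by_cases h1 : l = j
        · subst h1; rw [hzj]; exact hyjε
        by_cases h2 : l = i
        · subst h2; rw [hzi]; exact hyiε
        · rw [hzo l h2 h1]; exact hy l
      have hzsum : ∑ l, z l = k := by
        have h0 : ∑ l, (z l - y l) = 0 := by
          rw [← Finset.sum_subset (Finset.subset_univ ({i, j} : Finset (Fin n)))
            (fun l _ hl => by
              simp only [Finset.mem_insert, Finset.mem_singleton, not_or] at hl
              rw [hzo l hl.1 hl.2, sub_self])]
          rw [Finset.sum_pair hij, hzi, hzj]; ring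
        rw [Finset.sum_sub_distrib] at h0
        linarith [hsum]
      have hle := hmin z ⟨hzmem, hzsum⟩
      -- objective difference
      have hD : lmlObj x z - lmlObj x y =
          (phi (y i + ε) - phi (y i)) + (phi (y j - ε) - phi (y j))
          - ε * x i + ε * x j := by
        rw [lml_eq, lml_eq, ← Finset.sum_sub_distrib]
        rw [← Finset.sum_subset (Finset.subset_univ ({i, j} : Finset (Fin n)))
          (fun l _ hl => by
            simp only [Finset.mem_insert, Finset.mem_singleton, not_or] at hl
            rw [hzo l hl.1 hl.2, sub_self])]
        rw [Finset.sum_pair hij, hzi, hzj]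
        ring
      -- convexity upper bounds
      have hb1 : phi (y i + ε) - phi (y i) ≤
          ε * (Real.log (y i + ε) - Real.log (1 - (y i + ε))) := by
        have h := grad_ineq hyiε (hy i)
        nlinarith [h]

      have hb2 : phi (y j - ε) - phi (y j) ≤
          -ε * (Real.log (y j - ε) - Real.log (1 - (y j - ε))) := by
        have h := grad_ineq hyjε (hy j)
        nlinarith [h]
      have hgε' : ε * g ε =
          ε * (Real.log (y i + ε) - Real.log (1 - (y i + ε))) - ε * x i
          - (ε * (Real.log (y j - ε) - Real.log (1 - (y j - ε))) - ε * x j) := by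
        rw [hg]; ring
      have hDle : lmlObj x z - lmlObj x y ≤ ε * g ε := by
        rw [hD, hgε']
        linarith [hb1, hb2]
      have hneg : ε * g ε < 0 := by
        rcases lt_or_ge 0 c with h | h
        · have hgpos : 0 < g ε := by
            rw [abs_of_pos h] at hgε
            have := abs_lt.mp hgε
            linarith [this.1]
          have hεneg : ε < 0 := by rw [hε, if_pos h]; linarith
          exact mul_neg_of_neg_of_pos hεneg hgpos
        · have hclt : c < 0 := lt_of_le_of_ne h hc0
          have hgneg : g ε < 0 := by
            rw [abs_of_neg hclt] at hgε
            have := abs_lt.mp hgε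
            linarith [this.2]
          have hεpos : 0 < ε := by rw [hε, if_neg (not_lt.mpr h)]; linarith
          exact mul_neg_of_pos_of_neg hεpos hgneg
      linarith
    -- now extract ν
    refine ⟨L ⟨0, by omega⟩, fun i => ?_⟩
    have hLi : x i + L ⟨0, by omega⟩ = Real.log (y i) - Real.log (1 - y i) := by
      rw [← hconst i ⟨0, by omega⟩]
      simp [hL]
    rw [hLi, logistic_logit (hy i)]
  · -- backward: dual form → minimizer
    rintro ⟨ν, hν⟩ z ⟨hzmem, hzsum⟩
    have key : ∀ i, phi (y i) - x i * y i + ν * (z i - y i) ≤ phi (z i) - x i * z i := by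
      intro i
      have hl : Real.log (y i) - Real.log (1 - y i) = x i + ν := by
        rw [hν i, logit_logistic]
      have h := grad_ineq (hy i) (hzmem i)
      rw [hl] at h
      nlinarith [h]
    have hzero : ∑ i, ν * (z i - y i) = 0 := by
      rw [← Finset.mul_sum, Finset.sum_sub_distrib, hzsum, hsum, sub_self, mul_zero]
    calc lmlObj x y = ∑ i, (phi (y i) - x i * y i + ν * (z i - y i)) := by
          rw [Finset.sum_add_distrib, hzero, add_zero, lml_eq]
      _ ≤ ∑ i, (phi (z i) - x i * z i) := Finset.sum_le_sum (fun i _ => key i)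
      _ = lmlObj x z := (lml_eq x z).symm
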